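/- Let d ≥ 1. Let ρ', ρ : 𝕋^d → [0,∞) be integrable, let u', u : 𝕋^d → ℝ^d be measurable with u essentially bounded, and assume that x ↦ ρ'(x)|u'(x)|² is integrable. Then, denoting by ‖·‖_F the Frobenius norm on d×d real matrices (so that ‖a⊗b‖_F = |a||b| for a,b ∈ ℝ^d), one has ∫_{𝕋^d} ‖ρ'u'⊗u' − ρu⊗u‖_F dx ≤ ∫_{𝕋^d} ρ'|u'−u|² dx + 2(∫_{𝕋^d} ρ' dx)^{1/2}(∫_{𝕋^d} ρ'|u'−u|² dx)^{1/2} ‖u‖_{L^∞} + ‖u‖_{L^∞}² ∫_{𝕋^d} |ρ'−ρ| dx. -/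

import Mathlib

open MeasureTheory
open scoped ENNReal NNReal

/-- The Frobenius norm of a real d×d matrix. -/
noncomputable def frobNorm {d : ℕ} (M : Matrix (Fin d) (Fin d) ℝ) : ℝ :=
  Real.sqrt (∑ i, ∑ j, (M i j)^2)

/-- The outer product a⊗b of two vectors, as a d×d matrix with entries aᵢbⱼ. -/
def outerProd {d : ℕ} (a b : EuclideanSpace ℝ (Fin d)) : Matrix (Fin d) (Fin d) ℝ :=
  Matrix.of fun i j => a i * b j

noncomputable def matVec {d : ℕ} (M : Matrix (Fin d) (Fin d) ℝ) :
    EuclideanSpace ℝ (Fin d × Fin d) :=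
  (WithLp.equiv 2 _).symm (fun p => M p.1 p.2)

lemma frobNorm_nonneg {d : ℕ} (M : Matrix (Fin d) (Fin d) ℝ) : 0 ≤ frobNorm M :=
  Real.sqrt_nonneg _

lemma frobNorm_eq_norm {d : ℕ} (M : Matrix (Fin d) (Fin d) ℝ) :
    frobNorm M = ‖matVec M‖ := by
  rw [EuclideanSpace.norm_eq]
  simp [frobNorm, matVec, Fintype.sum_prod_type, sq_abs, Real.norm_eq_abs]

lemma frobNorm_add_le {d : ℕ} (A B : Matrix (Fin d) (Fin d) ℝ) :
    frobNorm (A + B) ≤ frobNorm A + frobNorm B := by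
  have h : matVec (A + B) = matVec A + matVec B := by ext p; simp [matVec, Matrix.add_apply]
  simp only [frobNorm_eq_norm, h]; exact norm_add_le _ _

lemma frobNorm_smul {d : ℕ} (c : ℝ) (M : Matrix (Fin d) (Fin d) ℝ) :
    frobNorm (c • M) = |c| * frobNorm M := by
  have h : matVec (c • M) = c • matVec M := by ext p; simp [matVec, Matrix.smul_apply]
  simp [frobNorm_eq_norm, h, norm_smul, Real.norm_eq_abs]

lemma frobNorm_outer {d : ℕ} (a b : EuclideanSpace ℝ (Fin d)) :
    frobNorm (outerProd a b) = ‖a‖ * ‖b‖ := by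
  have h : ∑ i, ∑ j, (outerProd a b i j)^2 = (∑ i, (a i)^2) * (∑ j, (b j)^2) := by
    rw [Finset.sum_mul_sum]
    simp [outerProd, mul_pow]
  rw [frobNorm, h, Real.sqrt_mul (by positivity), EuclideanSpace.norm_eq,
    EuclideanSpace.norm_eq]
  simp [Real.norm_eq_abs, sq_abs]

lemma key_pointwise {d : ℕ} (c c' : ℝ) (hc : 0 ≤ c) (a b : EuclideanSpace ℝ (Fin d)) :
    frobNorm (c • outerProd a a - c' • outerProd b b) ≤
      c * ‖a - b‖^2 + 2 * (c * ‖a - b‖) * ‖b‖ + |c - c'| * ‖b‖^2 := by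
  have hid : c • outerProd a a - c' • outerProd b b
      = ((c • outerProd (a-b) (a-b) + c • outerProd (a-b) b) + c • outerProd b (a-b))
        + (c-c') • outerProd b b := by
    ext i j
    simp only [Matrix.sub_apply, Matrix.add_apply, Matrix.smul_apply, outerProd, Matrix.of_apply,
      smul_eq_mul, PiLp.sub_apply]
    ring
  rw [hid]
  calc frobNorm _ ≤ frobNorm (c • outerProd (a-b) (a-b)) + frobNorm (c • outerProd (a-b) b)
        + frobNorm (c • outerProd b (a-b)) + frobNorm ((c-c') • outerProd b b) := by
        refine le_trans (frobNorm_add_le _ _) ?_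
        gcongr
        refine le_trans (frobNorm_add_le _ _) ?_
        gcongr
        exact frobNorm_add_le _ _
    _ ≤ _ := by
        simp only [frobNorm_smul, frobNorm_outer, abs_of_nonneg hc]
        nlinarith [norm_nonneg (a-b), norm_nonneg b, abs_nonneg (c-c')]

/-- Lemma A.5 (second inequality): control of the L¹ distance of the convective
stress tensors. -/
theorem stress_L1_estimate (d : ℕ) (hd : 1 ≤ d)
    (ρ' ρ : (Fin d → AddCircle (1:ℝ)) → ℝ)
    (u' u : (Fin d → AddCircle (1:ℝ)) → EuclideanSpace ℝ (Fin d))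
    (hρ'0 : ∀ x, 0 ≤ ρ' x) (hρ0 : ∀ x, 0 ≤ ρ x)
    (hρ'i : Integrable ρ') (hρi : Integrable ρ)
    (hu' : AEStronglyMeasurable u' volume) (hu : AEStronglyMeasurable u volume)
    (hubdd : MemLp u ⊤ volume)
    (hke : Integrable (fun x => ρ' x * ‖u' x‖^2)) :
    (∫ x, frobNorm (ρ' x • outerProd (u' x) (u' x) - ρ x • outerProd (u x) (u x))) ≤
      (∫ x, ρ' x * ‖u' x - u x‖^2)
        + 2 * Real.sqrt (∫ x, ρ' x) * Real.sqrt (∫ x, ρ' x * ‖u' x - u x‖^2) *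
            (eLpNorm u ⊤ volume).toReal
        + (eLpNorm u ⊤ volume).toReal^2 * (∫ x, |ρ' x - ρ x|) := by
  set M : ℝ := (eLpNorm u ⊤ volume).toReal with hMdef
  have hM0 : 0 ≤ M := ENNReal.toReal_nonneg
  -- a.e. bound on u
  have hMae : ∀ᵐ x, ‖u x‖ ≤ M := by
    have h1 := ae_le_eLpNormEssSup (f := u) (μ := volume)
    have hfin : eLpNormEssSup u volume ≠ ⊤ := by
      rw [← eLpNorm_exponent_top]; exact hubdd.2.ne
    filter_upwards [h1] with x hx
    have : ((‖u x‖₊ : ℝ≥0∞)).toReal ≤ (eLpNormEssSup u volume).toReal :=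
      ENNReal.toReal_mono hfin (by exact_mod_cast hx)
    simpa [hMdef, eLpNorm_exponent_top] using this
  -- measurability helpers
  have hw : AEStronglyMeasurable (fun x => ‖u' x - u x‖) volume := (hu'.sub hu).norm
  have hρ'm := hρ'i.aestronglyMeasurable
  -- integrability of ρ' ‖u'-u‖^2
  have h1 : Integrable (fun x => ρ' x * ‖u' x - u x‖^2) := by
    have hdom1 : Integrable (fun x => 2 * (ρ' x * ‖u' x‖^2) + 2*M^2 * ρ' x) :=
      (hke.const_mul 2).add (hρ'i.const_mul (2*M^2))
    refine Integrable.mono' hdom1 ?_ ?_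
    · exact hρ'm.mul (hw.pow 2)
    · filter_upwards [hMae] with x hx
      have h2 : ‖u' x - u x‖ ≤ ‖u' x‖ + ‖u x‖ := norm_sub_le _ _
      have h3 := hρ'0 x
      have h4 := norm_nonneg (u' x)
      have h5 := norm_nonneg (u' x - u x)
      have h7 := norm_nonneg (u x)
      rw [Real.norm_of_nonneg (by positivity)]
      have hb : ‖u' x - u x‖^2 ≤ 2*‖u' x‖^2 + 2*M^2 := by
        nlinarith [sq_nonneg (‖u' x‖ - ‖u x‖), mul_nonneg (sub_nonneg.2 hx) h7]
      nlinarith [mul_le_mul_of_nonneg_left hb h3]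
  -- integrability of ρ' ‖u'-u‖
  have h2 : Integrable (fun x => ρ' x * ‖u' x - u x‖) := by
    have hdom2 : Integrable (fun x => ρ' x + ρ' x * ‖u' x - u x‖^2) := hρ'i.add h1
    refine Integrable.mono' hdom2 (hρ'm.mul hw) ?_
    filter_upwards with x
    have h3 := hρ'0 x
    have h5 := norm_nonneg (u' x - u x)
    rw [Real.norm_of_nonneg (by positivity)]
    nlinarith [sq_nonneg (‖u' x - u x‖ - 1), mul_nonneg h3 (sq_nonneg (‖u' x - u x‖ - 1))]
  have h3 : Integrable (fun x => |ρ' x - ρ x|) := (hρ'i.sub hρi).abs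
  -- measurability of the Frobenius integrand
  have hFm : AEStronglyMeasurable
      (fun x => frobNorm (ρ' x • outerProd (u' x) (u' x) - ρ x • outerProd (u x) (u x)))
      volume := by
    have hcoord : ∀ (v : (Fin d → AddCircle (1:ℝ)) → EuclideanSpace ℝ (Fin d)),
        AEStronglyMeasurable v volume → ∀ i : Fin d,
        AEStronglyMeasurable (fun x => v x i) volume := fun v hv i =>
      ((EuclideanSpace.proj i : EuclideanSpace ℝ (Fin d) →L[ℝ] ℝ).continuous).comp_aestronglyMeasurable hv
    have heq : (fun x => frobNorm (ρ' x • outerProd (u' x) (u' x) - ρ x • outerProd (u x) (u x)))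
        = fun x => Real.sqrt (∑ i, ∑ j,
            (ρ' x * (u' x i * u' x j) - ρ x * (u x i * u x j))^2) := by
      funext x
      simp [frobNorm, outerProd, Matrix.sub_apply, Matrix.smul_apply, smul_eq_mul]
    rw [heq]
    refine Real.continuous_sqrt.comp_aestronglyMeasurable ?_
    refine Finset.aestronglyMeasurable_fun_sum _ fun i _ => ?_
    refine Finset.aestronglyMeasurable_fun_sum _ fun j _ => ?_
    exact ((hρ'm.mul ((hcoord u' hu' i).mul (hcoord u' hu' j))).sub
      (hρi.aestronglyMeasurable.mul ((hcoord u hu i).mul (hcoord u hu j)))).pow 2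
  -- the pointwise dominating function
  set g : (Fin d → AddCircle (1:ℝ)) → ℝ :=
    fun x => ρ' x * ‖u' x - u x‖^2 + 2 * M * (ρ' x * ‖u' x - u x‖) + M^2 * |ρ' x - ρ x|
    with hgdef
  have hgint : Integrable g := (h1.add ((h2.const_mul (2*M)))).add (h3.const_mul (M^2))
  have hptwise : ∀ᵐ x, frobNorm (ρ' x • outerProd (u' x) (u' x) - ρ x • outerProd (u x) (u x))
      ≤ g x := by
    filter_upwards [hMae] with x hx
    refine le_trans (key_pointwise (ρ' x) (ρ x) (hρ'0 x) (u' x) (u x)) ?_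
    simp only [hgdef]
    have h3 := hρ'0 x
    have h5 := norm_nonneg (u' x - u x)
    have h6 := abs_nonneg (ρ' x - ρ x)
    have h7 := norm_nonneg (u x)
    nlinarith [mul_nonneg (mul_nonneg h3 h5) (sub_nonneg.2 hx),
      mul_nonneg h6 (mul_nonneg (sub_nonneg.2 hx) (by linarith : (0:ℝ) ≤ M + ‖u x‖))]
  have hFint : Integrable
      (fun x => frobNorm (ρ' x • outerProd (u' x) (u' x) - ρ x • outerProd (u x) (u x))) := by
    refine Integrable.mono' hgint hFm ?_
    filter_upwards [hptwise] with x hx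
    rw [Real.norm_of_nonneg (frobNorm_nonneg _)]
    exact hx
  have hmain : (∫ x, frobNorm (ρ' x • outerProd (u' x) (u' x) - ρ x • outerProd (u x) (u x)))
      ≤ ∫ x, g x := integral_mono_ae hFint hgint hptwise
  -- split the integral of g
  have hsplit : (∫ x, g x) = (∫ x, ρ' x * ‖u' x - u x‖^2)
      + 2 * M * (∫ x, ρ' x * ‖u' x - u x‖) + M^2 * (∫ x, |ρ' x - ρ x|) := by
    have hB : Integrable (fun x => 2 * M * (ρ' x * ‖u' x - u x‖)) := h2.const_mul _
    have hAB : Integrable (fun x => ρ' x * ‖u' x - u x‖^2 + 2 * M * (ρ' x * ‖u' x - u x‖)) :=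
      h1.add hB
    have hC : Integrable (fun x => M^2 * |ρ' x - ρ x|) := h3.const_mul _
    simp only [hgdef]
    rw [integral_add hAB hC, integral_add h1 hB, integral_const_mul, integral_const_mul]
  -- Cauchy-Schwarz
  have hCS : (∫ x, ρ' x * ‖u' x - u x‖)
      ≤ Real.sqrt (∫ x, ρ' x) * Real.sqrt (∫ x, ρ' x * ‖u' x - u x‖^2) := by
    have hpq : (2:ℝ).HolderConjugate 2 := Real.HolderConjugate.two_two
    have hfm : AEStronglyMeasurable (fun x => Real.sqrt (ρ' x)) volume :=
      Real.continuous_sqrt.comp_aestronglyMeasurable hρ'm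
    have hgm : AEStronglyMeasurable (fun x => Real.sqrt (ρ' x) * ‖u' x - u x‖) volume :=
      hfm.mul hw
    have hf2 : MemLp (fun x => Real.sqrt (ρ' x)) (ENNReal.ofReal 2) volume := by
      rw [show ENNReal.ofReal 2 = 2 by norm_num]
      rw [memLp_two_iff_integrable_sq hfm]
      refine hρ'i.congr ?_
      filter_upwards with x
      rw [sq, Real.mul_self_sqrt (hρ'0 x)]
    have hg2 : MemLp (fun x => Real.sqrt (ρ' x) * ‖u' x - u x‖) (ENNReal.ofReal 2) volume := by
      rw [show ENNReal.ofReal 2 = 2 by norm_num]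
      rw [memLp_two_iff_integrable_sq hgm]
      refine h1.congr ?_
      filter_upwards with x
      rw [mul_pow, sq (Real.sqrt (ρ' x)), Real.mul_self_sqrt (hρ'0 x)]
    have := integral_mul_le_Lp_mul_Lq_of_nonneg hpq
      (Filter.Eventually.of_forall fun x => Real.sqrt_nonneg (ρ' x))
      (Filter.Eventually.of_forall fun x => mul_nonneg (Real.sqrt_nonneg _) (norm_nonneg _))
      hf2 hg2
    have heq1 : (∫ x, Real.sqrt (ρ' x) * (Real.sqrt (ρ' x) * ‖u' x - u x‖))
        = ∫ x, ρ' x * ‖u' x - u x‖ := by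
      refine integral_congr_ae (Filter.Eventually.of_forall fun x => ?_)
      show Real.sqrt (ρ' x) * (Real.sqrt (ρ' x) * ‖u' x - u x‖) = ρ' x * ‖u' x - u x‖
      rw [← mul_assoc, Real.mul_self_sqrt (hρ'0 x)]
    have heq2 : (∫ x, Real.sqrt (ρ' x) ^ (2:ℝ)) = ∫ x, ρ' x := by
      refine integral_congr_ae (Filter.Eventually.of_forall fun x => ?_)
      show Real.sqrt (ρ' x) ^ (2:ℝ) = ρ' x
      rw [Real.rpow_two, sq, Real.mul_self_sqrt (hρ'0 x)]
    have heq3 : (∫ x, (Real.sqrt (ρ' x) * ‖u' x - u x‖) ^ (2:ℝ))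
        = ∫ x, ρ' x * ‖u' x - u x‖^2 := by
      refine integral_congr_ae (Filter.Eventually.of_forall fun x => ?_)
      show (Real.sqrt (ρ' x) * ‖u' x - u x‖) ^ (2:ℝ) = ρ' x * ‖u' x - u x‖^2
      rw [Real.rpow_two, mul_pow, sq (Real.sqrt (ρ' x)), Real.mul_self_sqrt (hρ'0 x)]
    rw [heq1, heq2, heq3] at this
    rw [Real.sqrt_eq_rpow, Real.sqrt_eq_rpow]
    exact this
  have hAnn : 0 ≤ Real.sqrt (∫ x, ρ' x) * Real.sqrt (∫ x, ρ' x * ‖u' x - u x‖^2) :=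
    mul_nonneg (Real.sqrt_nonneg _) (Real.sqrt_nonneg _)
  calc (∫ x, frobNorm (ρ' x • outerProd (u' x) (u' x) - ρ x • outerProd (u x) (u x)))
      ≤ ∫ x, g x := hmain
    _ = (∫ x, ρ' x * ‖u' x - u x‖^2)
        + 2 * M * (∫ x, ρ' x * ‖u' x - u x‖) + M^2 * (∫ x, |ρ' x - ρ x|) := hsplit
    _ ≤ _ := by
        have := mul_le_mul_of_nonneg_left hCS (by linarith : (0:ℝ) ≤ 2 * M)
        linarith
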